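/- Suppose Assumptions A and B hold. Let x^r ∈ X, y^r ∈ Y, β > 0, and for each i let x_i^{r+1} = argmin_{x_i ∈ X_i} U_i(x_i; w_i^{r+1}, y^r) + h_i(x_i) + (β/2)‖x_i − x_i^r‖², where w_i^{r+1} := (x_1^{r+1},…,x_{i−1}^{r+1}, x_i^r,…,x_K^r). Then for each i = 1,…,K, β ‖x_i^r − Px_i^β(x_i^r − (1/β)∇_{x_i} f(x^r, y^r))‖ ≤ (β + L_{u_i} + L_{x_i}) ‖x^{r+1} − x^r‖, i.e., the i-th block of the stationarity gap at (x^r, y^r) is bounded by a constant multiple of the successive difference of iterates. -/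

import Mathlib

open scoped RealInnerProductSpace

/-- The `i`-th block space `ℝ^N`. -/
abbrev Blk (N : ℕ) : Type := EuclideanSpace ℝ (Fin N)

/-- The full `x`-space `ℝ^{NK}`, with the Euclidean (ℓ²) product norm. -/
abbrev XVec (N K : ℕ) : Type := PiLp 2 (fun _ : Fin K => Blk N)

/-- The `y`-space `ℝ^M`. -/
abbrev YVec (M : ℕ) : Type := EuclideanSpace ℝ (Fin M)

/-- `hibsaW xs r i = w_i^{r+1} = (x_1^{r+1},…,x_{i−1}^{r+1}, x_i^r,…,x_K^r)`. -/
noncomputable def hibsaW {N K : ℕ} (xs : ℕ → XVec N K) (r : ℕ) (i : Fin K) : XVec N K :=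
  WithLp.toLp 2 fun j => if (j : ℕ) < (i : ℕ) then xs (r + 1) j else xs r j

/-- Replace the `i`-th block of `x` by `z`. -/
noncomputable def blockUpdate {N K : ℕ} (x : XVec N K) (i : Fin K) (z : Blk N) : XVec N K :=
  WithLp.toLp 2 (Function.update x i z)

/-- `wMix x x' i = (x'_1,…,x'_{i−1}, x_i,…,x_K)`: the blocks before `i` already updated. -/
noncomputable def wMix {N K : ℕ} (x x' : XVec N K) (i : Fin K) : XVec N K :=
  WithLp.toLp 2 fun j => if (j : ℕ) < (i : ℕ) then x' j else x j

lemma aux_limit (C E : ℝ) (hC : ∀ t : ℝ, 0 < t → t ≤ 1 → 0 ≤ C + t * E) : 0 ≤ C := by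
  by_contra hneg
  push_neg at hneg
  rcases le_or_gt E 0 with hE | hE
  · have := hC 1 one_pos le_rfl; nlinarith
  · have ht0 : 0 < min 1 (-C / (2 * E)) := lt_min one_pos (div_pos (by linarith) (by linarith))
    have h1 := hC _ ht0 (min_le_left _ _)
    have h2 : min 1 (-C / (2 * E)) * E ≤ (-C / (2 * E)) * E :=
      mul_le_mul_of_nonneg_right (min_le_right _ _) hE.le
    have h3 : (-C / (2 * E)) * E = -C / 2 := by field_simp
    linarith

lemma vi {N : ℕ} (S : Set (Blk N)) (hS : Convex ℝ S)
    (h φ : Blk N → ℝ) (hh : ConvexOn ℝ Set.univ h)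
    (p z : Blk N) (hp : p ∈ S) (hz : z ∈ S)
    (G : Blk N) (Lq : ℝ)
    (hlin : ∀ t : ℝ, 0 < t → t ≤ 1 → p + t • (z - p) ∈ S →
      φ (p + t • (z - p)) - φ p ≤ t * ⟪G, z - p⟫ + t ^ 2 * (Lq * ‖z - p‖ ^ 2))
    (hmin : ∀ u ∈ S, φ p + h p ≤ φ u + h u) :
    0 ≤ ⟪G, z - p⟫ + (h z - h p) := by
  apply aux_limit _ (Lq * ‖z - p‖ ^ 2)
  intro t ht0 ht1
  have hmem : p + t • (z - p) ∈ S := by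
    have := hS hp hz (by linarith : (0:ℝ) ≤ 1 - t) ht0.le (by ring)
    convert this using 1
    module
  have hmin' := hmin _ hmem
  have hconv : h (p + t • (z - p)) ≤ (1 - t) * h p + t * h z := by
    have := hh.2 (Set.mem_univ p) (Set.mem_univ z)
      (by linarith : (0:ℝ) ≤ 1 - t) ht0.le (by ring)
    calc h (p + t • (z - p)) = h ((1 - t) • p + t • z) := by congr 1; module
    _ ≤ _ := this
  have hl := hlin t ht0 ht1 hmem
  have key : 0 ≤ t * ((⟪G, z - p⟫ + (h z - h p)) + t * (Lq * ‖z - p‖ ^ 2)) := by nlinarith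
  exact (mul_nonneg_iff_of_pos_left ht0).mp key

lemma blk_norm_le {N K : ℕ} (u : XVec N K) (i : Fin K) : ‖u i‖ ≤ ‖u‖ := by
  have h2 : ‖u i‖ ^ 2 ≤ ‖u‖ ^ 2 := by
    rw [show ‖u‖ = Real.sqrt (∑ j, ‖u j‖ ^ 2) from PiLp.norm_eq_of_L2 u,
      Real.sq_sqrt (by positivity)]
    exact Finset.single_le_sum (f := fun j => ‖u j‖ ^ 2) (fun j _ => sq_nonneg _)
      (Finset.mem_univ i)
  exact (pow_le_pow_iff_left₀ (norm_nonneg _) (norm_nonneg _) two_ne_zero).mp h2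

lemma pilp_norm_le {N K : ℕ} (u v : XVec N K) (hj : ∀ j, ‖u j‖ ≤ ‖v j‖) : ‖u‖ ≤ ‖v‖ := by
  rw [show ‖u‖ = Real.sqrt (∑ j, ‖u j‖ ^ 2) from PiLp.norm_eq_of_L2 u,
    show ‖v‖ = Real.sqrt (∑ j, ‖v j‖ ^ 2) from PiLp.norm_eq_of_L2 v]
  exact Real.sqrt_le_sqrt
    (Finset.sum_le_sum fun j _ => pow_le_pow_left₀ (norm_nonneg _) (hj j) 2)


set_option maxHeartbeats 1000000 in
/-- Bound on the `x`-blocks of the stationarity gap by the successive difference of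
iterates: under Assumptions A and B, if `x'` is produced from `(x, y)` by one round of
HiBSA block updates with proximal parameter `β > 0`, then for each `i`,
`β‖x_i − Px_i^β(x_i − (1/β)∇_{x_i} f(x, y))‖ ≤ (β + L_{uᵢ} + L_{xᵢ})‖x' − x‖`. -/
theorem hibsa_gap_x_bound
    {N K M : ℕ}
    -- Assumption A
    (f : XVec N K → YVec M → ℝ)
    (Xi : Fin K → Set (Blk N)) (hXiconv : ∀ i, Convex ℝ (Xi i))
    (hXicomp : ∀ i, IsCompact (Xi i))
    (Y : Set (YVec M)) (hYconv : Convex ℝ Y) (hYcomp : IsCompact Y)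
    (h : Fin K → Blk N → ℝ) (hhconv : ∀ i, ConvexOn ℝ Set.univ (h i))
    (g : YVec M → ℝ) (hgconv : ConvexOn ℝ Set.univ g)
    (Gfx : XVec N K → YVec M → XVec N K)
    (hGfx : ∀ x y, HasGradientAt (fun z => f z y) (Gfx x y) x)
    (Lx : Fin K → ℝ)
    (hLx : ∀ (i : Fin K) (y : YVec M), y ∈ Y → ∀ x x' : XVec N K,
      (∀ j, x j ∈ Xi j) → (∀ j, x' j ∈ Xi j) →
      ‖Gfx x' y i - Gfx x y i‖ ≤ Lx i * ‖x' - x‖)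
    -- Assumption B
    (U : Fin K → Blk N → XVec N K → YVec M → ℝ)
    (GU : Fin K → Blk N → XVec N K → YVec M → Blk N)
    (hGU : ∀ i z w y, HasGradientAt (fun u => U i u w y) (GU i z w y) z)
    (μ : Fin K → ℝ) (hμpos : ∀ i, 0 < μ i)
    (hB1 : ∀ (i : Fin K) (w : XVec N K) (y : YVec M), y ∈ Y →
      ∀ z z' : Blk N, z ∈ Xi i → z' ∈ Xi i →
      ⟪GU i z' w y, z - z'⟫ + μ i / 2 * ‖z - z'‖ ^ 2 ≤ U i z w y - U i z' w y)
    (hB2 : ∀ (i : Fin K) (x : XVec N K) (y : YVec M),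
      (∀ j, x j ∈ Xi j) → y ∈ Y → GU i (x i) x y = Gfx x y i)
    (hB3 : ∀ (i : Fin K) (x : XVec N K) (y : YVec M),
      (∀ j, x j ∈ Xi j) → y ∈ Y →
      (∀ z ∈ Xi i, f (blockUpdate x i z) y ≤ U i z x y) ∧ U i (x i) x y = f x y)
    (Lu : Fin K → ℝ)
    (hB4 : ∀ (i : Fin K) (w : XVec N K) (y : YVec M) (z z' : Blk N),
      ‖GU i z w y - GU i z' w y‖ ≤ Lu i * ‖z - z'‖)
    -- one round of HiBSA x-updates
    (β : ℝ) (hβ : 0 < β)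
    (x x' : XVec N K) (y : YVec M)
    (hxfeas : ∀ j, x j ∈ Xi j) (hy : y ∈ Y)
    (hup : ∀ i : Fin K,
      x' i ∈ Xi i ∧
      ∀ z ∈ Xi i,
        U i (x' i) (wMix x x' i) y + h i (x' i) + β / 2 * ‖x' i - x i‖ ^ 2
          ≤ U i z (wMix x x' i) y + h i z + β / 2 * ‖z - x i‖ ^ 2)
    -- the block proximity operators
    (Px : Fin K → Blk N → Blk N)
    (hPx : ∀ (i : Fin K) (v : Blk N), Px i v ∈ Xi i ∧
      ∀ z ∈ Xi i, h i (Px i v) + β / 2 * ‖Px i v - v‖ ^ 2 ≤ h i z + β / 2 * ‖z - v‖ ^ 2) :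
    -- conclusion
    ∀ i : Fin K,
      β * ‖x i - Px i (x i - β⁻¹ • Gfx x y i)‖ ≤ (β + Lu i + Lx i) * ‖x' - x‖ := by
  intro i
  set a := x i with ha
  set q := x' i with hq
  set w := wMix x x' i with hw
  set v := a - β⁻¹ • Gfx x y i with hv
  set p := Px i v with hp
  have hqS : q ∈ Xi i := (hup i).1
  have hpS : p ∈ Xi i := (hPx i v).1
  have hwfeas : ∀ j, w j ∈ Xi j := by
    intro j
    simp only [hw, wMix, PiLp.toLp_apply]
    split
    · exact (hup j).1
    · exact hxfeas j
  have hwi : w i = a := by simp [hw, wMix, ha]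
  -- variational inequality for the block update step
  have VI1 : 0 ≤ ⟪GU i q w y + β • (q - a), p - q⟫ + (h i p - h i q) := by
    refine vi (Xi i) (hXiconv i) (h i)
      (fun u => U i u w y + β / 2 * ‖u - a‖ ^ 2) (hhconv i) q p hqS hpS
      (GU i q w y + β • (q - a)) (Lu i + β / 2) ?_ ?_
    · intro t ht0 ht1 hmem
      set d := p - q with hd
      set zt := q + t • d with hzt
      have hztq : zt - q = t • d := by rw [hzt]; abel
      have hznorm : ‖zt - q‖ = t * ‖d‖ := by
        rw [hztq, norm_smul, Real.norm_eq_abs, abs_of_pos ht0]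
      have hUle : U i zt w y - U i q w y ≤ t * ⟪GU i zt w y, d⟫ := by
        have h1 := hB1 i w y hy q zt hqS hmem
        have h2 : ⟪GU i zt w y, q - zt⟫ = -(t * ⟪GU i zt w y, d⟫) := by
          rw [show q - zt = -(t • d) by rw [hztq.symm]; abel,
            inner_neg_right, real_inner_smul_right]
        have h3 : 0 ≤ μ i / 2 * ‖q - zt‖ ^ 2 :=
          mul_nonneg (by linarith [hμpos i]) (sq_nonneg _)
        linarith
      have hGUd : ⟪GU i zt w y, d⟫ ≤ ⟪GU i q w y, d⟫ + Lu i * (t * ‖d‖) * ‖d‖ := by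
        have hCS := real_inner_le_norm (GU i zt w y - GU i q w y) d
        rw [inner_sub_left] at hCS
        have hLip : ‖GU i zt w y - GU i q w y‖ ≤ Lu i * (t * ‖d‖) := by
          rw [← hznorm]; exact hB4 i w y zt q
        have := mul_le_mul_of_nonneg_right hLip (norm_nonneg d)
        linarith
      have hquad : ‖zt - a‖ ^ 2 = ‖q - a‖ ^ 2 + 2 * (t * ⟪q - a, d⟫) + t ^ 2 * ‖d‖ ^ 2 := by
        have hsplit : zt - a = (q - a) + t • d := by rw [hzt]; abel
        rw [hsplit, norm_add_sq_real, real_inner_smul_right, norm_smul,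
          Real.norm_eq_abs, mul_pow, sq_abs]
      have hGexp : ⟪GU i q w y + β • (q - a), d⟫
          = ⟪GU i q w y, d⟫ + β * ⟪q - a, d⟫ := by
        rw [inner_add_left, real_inner_smul_left]
      rw [hGexp]
      nlinarith [mul_le_mul_of_nonneg_left hGUd ht0.le, sq_nonneg ‖d‖, hβ.le]
    · intro u hu
      have := (hup i).2 u hu
      linarith
  -- variational inequality for the proximal step
  have VI2 : 0 ≤ ⟪β • (p - v), q - p⟫ + (h i q - h i p) := by
    refine vi (Xi i) (hXiconv i) (h i)
      (fun u => β / 2 * ‖u - v‖ ^ 2) (hhconv i) p q hpS hqS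
      (β • (p - v)) (β / 2) ?_ ?_
    · intro t ht0 ht1 hmem
      have hquad : ‖p + t • (q - p) - v‖ ^ 2
          = ‖p - v‖ ^ 2 + 2 * (t * ⟪p - v, q - p⟫) + t ^ 2 * ‖q - p‖ ^ 2 := by
        rw [show p + t • (q - p) - v = (p - v) + t • (q - p) by abel,
          norm_add_sq_real, real_inner_smul_right, norm_smul, Real.norm_eq_abs,
          mul_pow, sq_abs]
      rw [real_inner_smul_left]
      nlinarith [sq_nonneg ‖q - p‖, hβ.le]
    · intro u hu
      have := (hPx i v).2 u hu
      linarith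
  -- combine the two variational inequalities
  have hkey : β * ‖p - q‖ ^ 2 ≤ ⟪GU i q w y - Gfx x y i, p - q⟫ := by
    have hβv : β • (β⁻¹ • Gfx x y i) = Gfx x y i := by
      rw [smul_smul, mul_inv_cancel₀ hβ.ne', one_smul]
    have h1 : p - v = p - a + β⁻¹ • Gfx x y i := by rw [hv]; abel
    have h2 : β • (p - v) = β • (p - a) + Gfx x y i := by
      rw [h1, smul_add, hβv]
    have h3 : ⟪β • (p - v), q - p⟫ = -⟪β • (p - v), p - q⟫ := by
      rw [show q - p = -(p - q) by abel, inner_neg_right]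
    have h4 : GU i q w y + β • (q - a) - β • (p - v)
        = (GU i q w y - Gfx x y i) + β • (q - p) := by
      rw [h2]; module
    have h5 : ⟪GU i q w y + β • (q - a) - β • (p - v), p - q⟫
        = ⟪GU i q w y - Gfx x y i, p - q⟫ - β * ‖p - q‖ ^ 2 := by
      rw [h4, inner_add_left, real_inner_smul_left,
        show q - p = -(p - q) by abel, inner_neg_left,
        real_inner_self_eq_norm_sq]
      ring
    have h6 : 0 ≤ ⟪GU i q w y + β • (q - a) - β • (p - v), p - q⟫ := by
      rw [inner_sub_left]
      rw [h3] at VI2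
      linarith
    rw [h5] at h6
    linarith
  -- Lipschitz bound on the gradient error
  have h1 := hB4 i w y q a
  have h3 := hLx i y hy x w hxfeas hwfeas
  have hgrad : ‖GU i q w y - Gfx x y i‖ ≤ Lu i * ‖q - a‖ + Lx i * ‖w - x‖ := by
    have h2 : GU i a w y = Gfx w y i := by rw [← hwi]; exact hB2 i w y hwfeas hy
    have htri : ‖GU i q w y - Gfx x y i‖
        ≤ ‖GU i q w y - GU i a w y‖ + ‖GU i a w y - Gfx x y i‖ := by
      have := norm_add_le (GU i q w y - GU i a w y) (GU i a w y - Gfx x y i)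
      rw [show GU i q w y - GU i a w y + (GU i a w y - Gfx x y i)
        = GU i q w y - Gfx x y i by abel] at this
      exact this
    have h3' : ‖GU i a w y - Gfx x y i‖ ≤ Lx i * ‖w - x‖ := by rw [h2]; exact h3
    linarith
  have hLuq : 0 ≤ Lu i * ‖q - a‖ := (norm_nonneg _).trans h1
  have hLxw : 0 ≤ Lx i * ‖w - x‖ := (norm_nonneg _).trans h3
  have hpq : β * ‖p - q‖ ≤ Lu i * ‖q - a‖ + Lx i * ‖w - x‖ := by
    rcases eq_or_lt_of_le (norm_nonneg (p - q)) with h0 | h0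
    · rw [← h0, mul_zero]; exact add_nonneg hLuq hLxw
    · have hCS := real_inner_le_norm (GU i q w y - Gfx x y i) (p - q)
      have hfin := hkey.trans
        (hCS.trans (mul_le_mul_of_nonneg_right hgrad (norm_nonneg _)))
      nlinarith
  -- norm comparisons
  have hqa : ‖q - a‖ ≤ ‖x' - x‖ := by
    rw [show q - a = (x' - x) i by simp [hq, ha]]
    exact blk_norm_le _ i
  have hwx : ‖w - x‖ ≤ ‖x' - x‖ := by
    apply pilp_norm_le
    intro j
    by_cases hj : (j : ℕ) < (i : ℕ)
    · rw [show (w - x) j = (x' - x) j by simp [hw, wMix, show j < i from hj]]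
    · rw [show (w - x) j = 0 by simp [hw, wMix, show ¬ j < i from hj]]
      simp
  have htr : ‖a - p‖ ≤ ‖q - a‖ + ‖p - q‖ := by
    have := norm_add_le (a - q) (q - p)
    rw [show a - q + (q - p) = a - p by abel] at this
    calc ‖a - p‖ ≤ ‖a - q‖ + ‖q - p‖ := this
      _ = ‖q - a‖ + ‖p - q‖ := by rw [norm_sub_rev a q, norm_sub_rev q p]
  rcases eq_or_lt_of_le (norm_nonneg (x' - x)) with hs | hs
  · -- x' = x : everything collapses
    have hqa0 : ‖q - a‖ = 0 := le_antisymm (hqa.trans hs.ge) (norm_nonneg _)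
    have hwx0 : ‖w - x‖ = 0 := le_antisymm (hwx.trans hs.ge) (norm_nonneg _)
    rw [← hs, mul_zero]
    have e1 := mul_le_mul_of_nonneg_left htr hβ.le
    have e2 : Lu i * ‖q - a‖ = 0 := by rw [hqa0, mul_zero]
    have e3 : Lx i * ‖w - x‖ = 0 := by rw [hwx0, mul_zero]
    have e4 : β * ‖q - a‖ = 0 := by rw [hqa0, mul_zero]
    nlinarith
  · -- x' ≠ x : the Lipschitz constants are nonnegative
    have hne : x' ≠ x := by
      intro e
      rw [e, sub_self, norm_zero] at hs
      exact lt_irrefl _ hs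
    have hex : ∃ j, x' j ≠ x j := by
      by_contra hall
      push_neg at hall
      exact hne (PiLp.ext hall)
    obtain ⟨j, hj⟩ := hex
    have hjn : 0 < ‖x' j - x j‖ := by
      rw [norm_pos_iff]
      exact sub_ne_zero_of_ne hj
    have hLu0 : 0 ≤ Lu i := by
      have := (norm_nonneg (GU i (x' j) w y - GU i (x j) w y)).trans
        (hB4 i w y (x' j) (x j))
      exact (mul_nonneg_iff_of_pos_right hjn).mp this
    have hLx0 : 0 ≤ Lx i := by
      have := (norm_nonneg (Gfx x' y i - Gfx x y i)).trans
        (hLx i y hy x x' hxfeas (fun j => (hup j).1))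
      exact (mul_nonneg_iff_of_pos_right hs).mp this
    have e1 := mul_le_mul_of_nonneg_left htr hβ.le
    have e2 := mul_le_mul_of_nonneg_left hqa hβ.le
    have e3 := mul_le_mul_of_nonneg_left hqa hLu0
    have e4 := mul_le_mul_of_nonneg_left hwx hLx0
    nlinarith
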